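/- Let V_a ⪯ V_b be symmetric matrices with V_a ⪰ λI, and let E_a, E_b be symmetric with operator norm at most η, ρ := η/λ < 1, c_ρ := (1+ρ)/(1−ρ). If λ_max((V_a+E_a)^{-1/2}(V_b+E_b)(V_a+E_a)^{-1/2}) ≤ α for some α ≥ 1, then for every x, ‖x‖_{V_a^{-1}} ≤ √(c_ρ α) · ‖x‖_{V_b^{-1}}. -/

import Mathlib

open Matrix

open scoped ComplexOrder in
/-- The square root of a positive semidefinite matrix, as defined in the older Mathlib
(`Matrix.PosSemidef.sqrt`, removed since). -/
noncomputable def Matrix.PosSemidef.sqrt {n 𝕜 : Type*} [Fintype n] [DecidableEq n] [RCLike 𝕜]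
    {A : Matrix n n 𝕜} (hA : A.PosSemidef) : Matrix n n 𝕜 :=
  hA.1.eigenvectorUnitary.1 * diagonal ((↑) ∘ (√·) ∘ hA.1.eigenvalues) *
    (star hA.1.eigenvectorUnitary : Matrix n n 𝕜)

lemma psd_sqrt_mul_self {d : ℕ} {A : Matrix (Fin d) (Fin d) ℝ} (hA : A.PosSemidef) :
    hA.sqrt * hA.sqrt = A := by
  have hUU : (star hA.1.eigenvectorUnitary : Matrix (Fin d) (Fin d) ℝ) * hA.1.eigenvectorUnitary.1
      = 1 := mem_unitaryGroup_iff'.mp hA.1.eigenvectorUnitary.2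
  have hDD : diagonal ((RCLike.ofReal : ℝ → ℝ) ∘ (√·) ∘ hA.1.eigenvalues) *
      diagonal ((RCLike.ofReal : ℝ → ℝ) ∘ (√·) ∘ hA.1.eigenvalues)
      = diagonal (RCLike.ofReal ∘ hA.1.eigenvalues) := by
    rw [diagonal_mul_diagonal]
    congr 1
    funext i
    simp [Real.mul_self_sqrt (hA.eigenvalues_nonneg i)]
  unfold Matrix.PosSemidef.sqrt
  calc _ = hA.1.eigenvectorUnitary.1 * (diagonal ((RCLike.ofReal : ℝ → ℝ) ∘ (√·) ∘ hA.1.eigenvalues) *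
      ((star hA.1.eigenvectorUnitary : Matrix (Fin d) (Fin d) ℝ) * hA.1.eigenvectorUnitary.1) *
      diagonal ((RCLike.ofReal : ℝ → ℝ) ∘ (√·) ∘ hA.1.eigenvalues)) *
      (star hA.1.eigenvectorUnitary : Matrix (Fin d) (Fin d) ℝ) := by
        simp only [Matrix.mul_assoc]
    _ = A := by
        rw [hUU, Matrix.mul_one, hDD]
        exact hA.1.spectral_theorem.symm

lemma psd_sqrt_herm {d : ℕ} {A : Matrix (Fin d) (Fin d) ℝ} (hA : A.PosSemidef) :
    hA.sqrtᴴ = hA.sqrt := by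
  unfold Matrix.PosSemidef.sqrt
  simp [conjTranspose_mul, Matrix.mul_assoc, Matrix.star_eq_conjTranspose]

lemma quad_nonneg {d : ℕ} {A : Matrix (Fin d) (Fin d) ℝ} (h : A.PosSemidef) (x : Fin d → ℝ) :
    0 ≤ x ⬝ᵥ A.mulVec x := by simpa using h.dotProduct_mulVec_nonneg x

lemma symm_quad {d : ℕ} {A : Matrix (Fin d) (Fin d) ℝ} (hA : A.IsHermitian)
    (u v : Fin d → ℝ) : v ⬝ᵥ A.mulVec u = u ⬝ᵥ A.mulVec v := by
  have ht : Aᵀ = A := by rw [← conjTranspose_eq_transpose_of_trivial]; exact hA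
  rw [dotProduct_mulVec, ← mulVec_transpose, ht, dotProduct_comm]

lemma smul_one_sub_psd {d : ℕ} {M : Matrix (Fin d) (Fin d) ℝ} (hMH : M.IsHermitian)
    {α : ℝ} (hmax : ∀ i, hMH.eigenvalues i ≤ α) :
    (α • (1 : Matrix (Fin d) (Fin d) ℝ) - M).PosSemidef := by
  set U : Matrix (Fin d) (Fin d) ℝ := (hMH.eigenvectorUnitary : Matrix (Fin d) (Fin d) ℝ)
  have hUU : U * star U = 1 := mem_unitaryGroup_iff.mp hMH.eigenvectorUnitary.2
  have hDpsd : (diagonal (fun i => α - hMH.eigenvalues i) : Matrix (Fin d) (Fin d) ℝ).PosSemidef :=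
    .diagonal (fun i => sub_nonneg.mpr (hmax i))
  have hd : (diagonal (fun i => α - hMH.eigenvalues i) : Matrix (Fin d) (Fin d) ℝ)
      = α • 1 - diagonal (RCLike.ofReal ∘ hMH.eigenvalues) := by
    ext i j
    by_cases h : i = j <;>
      simp [diagonal_apply, h, Matrix.one_apply, Matrix.smul_apply, Matrix.sub_apply]
  have hEq : α • (1 : Matrix (Fin d) (Fin d) ℝ) - M
      = U * diagonal (fun i => α - hMH.eigenvalues i) * star U := by
    rw [hd, Matrix.mul_sub, Matrix.sub_mul, Matrix.mul_smul, Matrix.mul_one, Matrix.smul_mul, hUU]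
    congr 1
    exact hMH.spectral_theorem
  rw [hEq]
  simpa [Matrix.star_eq_conjTranspose] using hDpsd.mul_mul_conjTranspose_same U

/-- Cauchy–Schwarz for a PSD quadratic form. -/
lemma psd_cauchy_schwarz {d : ℕ} {A : Matrix (Fin d) (Fin d) ℝ} (h : A.PosSemidef)
    (u v : Fin d → ℝ) :
    (u ⬝ᵥ A.mulVec v) ^ 2 ≤ (u ⬝ᵥ A.mulVec u) * (v ⬝ᵥ A.mulVec v) := by
  have key : ∀ t : ℝ, 0 ≤ (v ⬝ᵥ A.mulVec v) * (t * t) + (2 * (u ⬝ᵥ A.mulVec v)) * t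
      + (u ⬝ᵥ A.mulVec u) := by
    intro t
    have h0 := quad_nonneg h (u + t • v)
    have hsym := symm_quad h.1 u v
    simp only [mulVec_add, mulVec_smul, dotProduct_add, add_dotProduct, smul_dotProduct,
      dotProduct_smul, smul_eq_mul] at h0
    rw [hsym] at h0
    ring_nf at h0 ⊢
    linarith
  have hd := discrim_le_zero key
  rw [discrim] at hd
  nlinarith [hd]

set_option maxHeartbeats 1000000 in
/-- Part (i) of the main theorem: if the private Rayleigh trigger is not fired,
`λ_max((V_a+E_a)^{-1/2}(V_b+E_b)(V_a+E_a)^{-1/2}) ≤ α`, then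
`‖x‖_{V_a⁻¹} ≤ √(c_ρ α) · ‖x‖_{V_b⁻¹}` for every `x`. -/
theorem stmt_13 {d : ℕ} (Va Vb Ea Eb : Matrix (Fin d) (Fin d) ℝ)
    (hVa : Va.IsHermitian) (hVb : Vb.IsHermitian)
    (hEa : Ea.IsHermitian) (hEb : Eb.IsHermitian)
    (lam η : ℝ) (hlam : 0 < lam) (hη : 0 ≤ η)
    (hVal : (Va - lam • (1 : Matrix (Fin d) (Fin d) ℝ)).PosSemidef)
    (hVab : (Vb - Va).PosSemidef)
    (hEa1 : (η • (1 : Matrix (Fin d) (Fin d) ℝ) - Ea).PosSemidef)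
    (hEa2 : (Ea + η • (1 : Matrix (Fin d) (Fin d) ℝ)).PosSemidef)
    (hEb1 : (η • (1 : Matrix (Fin d) (Fin d) ℝ) - Eb).PosSemidef)
    (hEb2 : (Eb + η • (1 : Matrix (Fin d) (Fin d) ℝ)).PosSemidef)
    (ρ cρ : ℝ) (hρ : ρ = η / lam) (hρ1 : ρ < 1) (hcρ : cρ = (1 + ρ) / (1 - ρ))
    (htaP : (Va + Ea).PosSemidef)
    (M : Matrix (Fin d) (Fin d) ℝ)
    (hM : M = (htaP.sqrt)⁻¹ * (Vb + Eb) * (htaP.sqrt)⁻¹)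
    (hMH : M.IsHermitian)
    (α : ℝ) (hα : 1 ≤ α) (hmax : ∀ i, hMH.eigenvalues i ≤ α) :
    ∀ x : Fin d → ℝ,
      Real.sqrt (x ⬝ᵥ (Va⁻¹).mulVec x)
        ≤ Real.sqrt (cρ * α) * Real.sqrt (x ⬝ᵥ (Vb⁻¹).mulVec x) := by
  have hρ0 : 0 ≤ ρ := hρ ▸ div_nonneg hη hlam.le
  have hηρ : η = ρ * lam := by rw [hρ]; field_simp
  -- Va is positive definite
  have hVaPD : Va.PosDef := by
    refine PosDef.of_dotProduct_mulVec_pos hVa fun x hx => ?_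
    have h1 := quad_nonneg hVal x
    have h2 : 0 < x ⬝ᵥ x := by
      rcases lt_or_eq_of_le (by simpa using dotProduct_star_self_nonneg x : (0:ℝ) ≤ x ⬝ᵥ x) with h | h
      · exact h
      · exact absurd (dotProduct_self_eq_zero.mp h.symm) hx
    simp only [sub_mulVec, dotProduct_sub, smul_mulVec, one_mulVec, dotProduct_smul,
      smul_eq_mul] at h1
    simp only [star_trivial]
    nlinarith
  have hVbPD : Vb.PosDef := by
    refine PosDef.of_dotProduct_mulVec_pos hVb fun x hx => ?_
    have h1 := quad_nonneg hVab x
    simp only [sub_mulVec, dotProduct_sub] at h1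
    have h2 := hVaPD.dotProduct_mulVec_pos hx
    simp only [star_trivial] at h2 ⊢
    linarith
  -- T := Va + Ea is positive definite, S := sqrt is invertible
  set S : Matrix (Fin d) (Fin d) ℝ := htaP.sqrt with hSdef
  have hSS : S * S = Va + Ea := psd_sqrt_mul_self htaP
  have hTPD : (Va + Ea).PosDef := by
    refine PosDef.of_dotProduct_mulVec_pos htaP.1 fun x hx => ?_
    have h1 := hVaPD.dotProduct_mulVec_pos hx
    have h2 := quad_nonneg hEa2 x
    have h3 := quad_nonneg hVal x
    have hxx : (0:ℝ) ≤ x ⬝ᵥ x := by simpa using dotProduct_star_self_nonneg x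
    simp only [add_mulVec, sub_mulVec, dotProduct_add, dotProduct_sub, smul_mulVec,
      one_mulVec, dotProduct_smul, smul_eq_mul, star_trivial] at h1 h2 h3 ⊢
    nlinarith
  have hdetS : IsUnit S.det := by
    have hdT : 0 < (Va + Ea).det := hTPD.det_pos
    have : S.det * S.det = (Va + Ea).det := by rw [← det_mul, hSS]
    refine isUnit_iff_ne_zero.mpr fun h => ?_
    rw [h, mul_zero] at this
    exact absurd this.symm (ne_of_gt hdT)
  -- transfer the eigenvalue bound: (Vb+Eb) ⪯ α (Va+Ea)
  have hαM := smul_one_sub_psd hMH hmax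
  have hSMS : S * M * S = Vb + Eb := by
    rw [hM]
    simp only [← Matrix.mul_assoc]
    rw [Matrix.mul_nonsing_inv _ hdetS, Matrix.one_mul, Matrix.mul_assoc,
      Matrix.nonsing_inv_mul _ hdetS, Matrix.mul_one]
  have hconj : (S * (α • (1 : Matrix (Fin d) (Fin d) ℝ) - M) * Sᴴ).PosSemidef :=
    hαM.mul_mul_conjTranspose_same S
  have hSH : Sᴴ = S := psd_sqrt_herm htaP
  have hTrigMat : (α • (Va + Ea) - (Vb + Eb)).PosSemidef := by
    have : S * (α • (1 : Matrix (Fin d) (Fin d) ℝ) - M) * Sᴴ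
        = α • (Va + Ea) - (Vb + Eb) := by
      rw [hSH, Matrix.mul_sub, Matrix.sub_mul, Matrix.mul_smul, Matrix.mul_one, Matrix.smul_mul,
        hSS, hSMS]
    rwa [this] at hconj
  -- key scalar inequality : qb ≤ cρ α qa
  have hkey : ∀ y : Fin d → ℝ, y ⬝ᵥ Vb.mulVec y ≤ (cρ * α) * (y ⬝ᵥ Va.mulVec y) := by
    intro y
    have h1 := quad_nonneg hVal y
    have h2 := quad_nonneg hVab y
    have h3 := quad_nonneg hEa1 y
    have h4 := quad_nonneg hEa2 y
    have h5 := quad_nonneg hEb1 y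
    have h6 := quad_nonneg hEb2 y
    have h7 := quad_nonneg hTrigMat y
    have hyy : (0:ℝ) ≤ y ⬝ᵥ y := by simpa using dotProduct_star_self_nonneg y
    simp only [add_mulVec, sub_mulVec, dotProduct_add, dotProduct_sub, smul_mulVec,
      one_mulVec, dotProduct_smul, smul_eq_mul] at h1 h2 h3 h4 h5 h6 h7
    set qa := y ⬝ᵥ Va.mulVec y
    set qb := y ⬝ᵥ Vb.mulVec y
    set qea := y ⬝ᵥ Ea.mulVec y
    set qeb := y ⬝ᵥ Eb.mulVec y
    set q1 := y ⬝ᵥ y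
    have hqa : 0 ≤ qa := by nlinarith
    have h1ρ : 0 < 1 - ρ := by linarith
    have hα0 : (0:ℝ) ≤ α := le_trans zero_le_one hα
    rw [hηρ] at h3 h4 h5 h6
    rw [hcρ]
    rw [div_mul_eq_mul_div, div_mul_eq_mul_div, le_div_iff₀ h1ρ]
    have e1 : qb ≤ α * qa + (α + 1) * (ρ * lam * q1) := by nlinarith [mul_nonneg hα0 h3]
    have e2 : ρ * lam * q1 ≤ ρ * qa := by nlinarith [mul_nonneg hρ0 h1]
    have e3 : qb ≤ (α + (α + 1) * ρ) * qa := by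
      nlinarith [mul_le_mul_of_nonneg_left e2 (by linarith : (0:ℝ) ≤ α + 1)]
    nlinarith [mul_le_mul_of_nonneg_right e3 h1ρ.le, mul_nonneg hρ0 hqa,
      mul_nonneg (mul_nonneg hρ0 hρ0) hqa,
      mul_nonneg (mul_nonneg hρ0 (by linarith : (0:ℝ) ≤ α - 1)) hqa,
      mul_nonneg (mul_nonneg hρ0 (mul_nonneg hρ0 hα0)) hqa]
  -- final Cauchy–Schwarz argument
  intro x
  have hcρα : 0 < cρ * α := by
    rw [hcρ]
    have : 0 < 1 - ρ := by linarith
    positivity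
  set u := (Va⁻¹).mulVec x with hu
  set v := (Vb⁻¹).mulVec x with hv
  have hVax : Va.mulVec u = x := by
    rw [hu, mulVec_mulVec,
      Matrix.mul_nonsing_inv _ (isUnit_iff_ne_zero.mpr (ne_of_gt hVaPD.det_pos)), one_mulVec]
  have hVbx : Vb.mulVec v = x := by
    rw [hv, mulVec_mulVec,
      Matrix.mul_nonsing_inv _ (isUnit_iff_ne_zero.mpr (ne_of_gt hVbPD.det_pos)), one_mulVec]
  have ha : x ⬝ᵥ u = u ⬝ᵥ Va.mulVec u := by rw [hVax, dotProduct_comm]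
  have hb : x ⬝ᵥ v = v ⬝ᵥ Vb.mulVec v := by rw [hVbx, dotProduct_comm]
  have ha0 : 0 ≤ x ⬝ᵥ u := quad_nonneg hVaPD.posSemidef.inv x
  have hb0 : 0 ≤ x ⬝ᵥ v := quad_nonneg hVbPD.posSemidef.inv x
  have hcs := psd_cauchy_schwarz hVbPD.posSemidef u v
  rw [hVbx, dotProduct_comm u x, dotProduct_comm v x] at hcs
  have huVbu : u ⬝ᵥ Vb.mulVec u ≤ (cρ * α) * (x ⬝ᵥ u) := by
    rw [ha]; exact hkey u
  have h1 : (x ⬝ᵥ u) ^ 2 ≤ (cρ * α) * (x ⬝ᵥ u) * (x ⬝ᵥ v) := by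
    nlinarith [mul_le_mul_of_nonneg_right huVbu hb0]
  have hmain : x ⬝ᵥ u ≤ (cρ * α) * (x ⬝ᵥ v) := by
    rcases eq_or_lt_of_le ha0 with h | h
    · refine le_trans h.symm.le ?_
      positivity
    · nlinarith [h1, h]
  calc Real.sqrt (x ⬝ᵥ u) ≤ Real.sqrt ((cρ * α) * (x ⬝ᵥ v)) := Real.sqrt_le_sqrt hmain
    _ = Real.sqrt (cρ * α) * Real.sqrt (x ⬝ᵥ v) := Real.sqrt_mul hcρα.le _
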